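/- Let n : ℕ and ρ, U : Matrix (Fin n → Fin 2) (Fin n → Fin 2) ℂ with U unitary. For S : Finset (Fin n), let X_S be the permutation matrix flipping all bits in S, and for p : ℝ define the n-qubit bit-flip channel N_p(ρ) := ∑_{S ⊆ Fin n} p^{|S|} (1-p)^{n-|S|} • (X_S * ρ * X_S). Suppose U commutes with X_{{i}} for every i : Fin n. Then for all p₁, p₂ ∈ [0,1], N_{p₂}(U * N_{p₁}(ρ) * Uᴴ) = U * N_q(ρ) * Uᴴ, where q = p₁(1-p₂) + p₂(1-p₁). That is, for circuits commuting with single-qubit bit flips (such as IQP circuits), independent input noise at rate p₁ combined with independent output noise at rate p₂ is equivalent to input noise alone at rate q. -/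

import Mathlib

open Matrix

section BitflipAuxSection
open Finset

namespace BitflipAux
variable {n : ℕ}

def flip (S : Finset (Fin n)) (x : Fin n → Fin 2) : Fin n → Fin 2 :=
  fun i => if i ∈ S then 1 - x i else x i

lemma flip_flip (S T : Finset (Fin n)) (x : Fin n → Fin 2) :
    flip T (flip S x) = flip (symmDiff S T) x := by
  funext i
  by_cases hS : i ∈ S <;> by_cases hT : i ∈ T <;>
    simp [flip, Finset.mem_symmDiff, hS, hT]

lemma flip_empty (x : Fin n → Fin 2) : flip (∅ : Finset (Fin n)) x = x := by
  funext i; simp [flip]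

lemma flip_invol (S : Finset (Fin n)) (x : Fin n → Fin 2) :
    flip S (flip S x) = x := by
  rw [flip_flip, symmDiff_self]; exact flip_empty x

variable (X : Finset (Fin n) → Matrix (Fin n → Fin 2) (Fin n → Fin 2) ℂ)
variable (hX : ∀ S : Finset (Fin n), X S = Matrix.of fun x y : Fin n → Fin 2 =>
      if (∀ i : Fin n, y i = if i ∈ S then 1 - x i else x i) then (1 : ℂ) else 0)

include hX

lemma X_eq (S : Finset (Fin n)) :
    X S = Matrix.of fun x y => if y = flip S x then (1 : ℂ) else 0 := by
  rw [hX]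
  ext x y
  simp only [Matrix.of_apply, funext_iff, flip]

lemma X_mul (S T : Finset (Fin n)) : X S * X T = X (symmDiff S T) := by
  ext x y
  simp only [X_eq X hX, Matrix.mul_apply, Matrix.of_apply, ite_mul, one_mul, zero_mul]
  rw [Finset.sum_ite_eq' Finset.univ (flip S x) (fun z => if y = flip T z then (1:ℂ) else 0)]
  simp [flip_flip]

lemma X_empty : X (∅ : Finset (Fin n)) = 1 := by
  ext x y
  simp [X_eq X hX, flip_empty, Matrix.one_apply, eq_comm]

lemma X_herm (S : Finset (Fin n)) : (X S)ᴴ = X S := by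
  ext x y
  simp only [X_eq X hX, conjTranspose_apply, Matrix.of_apply]
  have : x = flip S y ↔ y = flip S x := by
    constructor <;> (rintro rfl; rw [flip_invol])
  rw [show (if x = flip S y then (1:ℂ) else 0) = (if y = flip S x then (1:ℂ) else 0) by
    simp only [this]]
  split <;> simp

omit hX in lemma U_comm (U : Matrix (Fin n → Fin 2) (Fin n → Fin 2) ℂ) (hmul : ∀ S T, X S * X T = X (symmDiff S T))
    (hempty : X ∅ = 1)
    (hcomm : ∀ i : Fin n, U * X {i} = X {i} * U) (S : Finset (Fin n)) :
    U * X S = X S * U := by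
  induction S using Finset.induction with
  | empty => simp [hempty]
  | @insert i S h ih =>
    have hins : X (insert i S) = X {i} * X S := by
      rw [hmul]
      congr 1
      rw [Disjoint.symmDiff_eq_sup (by simpa using h)]
      rw [Finset.insert_eq]; rfl
    rw [hins, ← mul_assoc, hcomm, mul_assoc, ih, ← mul_assoc]

omit hX in lemma coeff_prod (p : ℝ) (S : Finset (Fin n)) :
    p ^ S.card * (1 - p) ^ (n - S.card) = ∏ i : Fin n, (if i ∈ S then p else 1 - p) := by
  rw [Finset.prod_ite]
  simp only [Finset.prod_const]
  congr 2
  · simp [Finset.filter_mem_eq_inter]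
  · rw [show Finset.filter (fun i => i ∉ S) Finset.univ = Sᶜ by
      ext i; simp, Finset.card_compl]
    simp

omit hX in lemma key (p₁ p₂ : ℝ) (R : Finset (Fin n)) :
    ∑ T : Finset (Fin n),
      (p₂ ^ T.card * (1 - p₂) ^ (n - T.card)) *
        (p₁ ^ (symmDiff T R).card * (1 - p₁) ^ (n - (symmDiff T R).card))
      = (p₁ * (1 - p₂) + p₂ * (1 - p₁)) ^ R.card *
        (1 - (p₁ * (1 - p₂) + p₂ * (1 - p₁))) ^ (n - R.card) := by
  set q : ℝ := p₁ * (1 - p₂) + p₂ * (1 - p₁) with hq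
  set a : Fin n → ℝ := fun i => if i ∈ R then p₂ * (1 - p₁) else p₂ * p₁ with ha
  set b : Fin n → ℝ := fun i => if i ∈ R then (1 - p₂) * p₁ else (1 - p₂) * (1 - p₁) with hb
  have hfilter : ∀ T : Finset (Fin n), Finset.filter (fun i => i ∈ T) Finset.univ = T := by
    intro T; ext i; simp
  have hfilter' : ∀ T : Finset (Fin n), Finset.filter (fun i => i ∉ T) Finset.univ = Tᶜ := by
    intro T; ext i; simp
  have step1 : ∀ T : Finset (Fin n),
      (p₂ ^ T.card * (1 - p₂) ^ (n - T.card)) *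
        (p₁ ^ (symmDiff T R).card * (1 - p₁) ^ (n - (symmDiff T R).card))
      = (∏ i ∈ T, a i) * ∏ i ∈ Finset.univ \ T, b i := by
    intro T
    rw [coeff_prod, coeff_prod, ← Finset.prod_mul_distrib]
    have : ∏ i : Fin n,
        ((if i ∈ T then p₂ else 1 - p₂) * if i ∈ symmDiff T R then p₁ else 1 - p₁)
        = ∏ i : Fin n, (if i ∈ T then a i else b i) := by
      apply Finset.prod_congr rfl
      intro i _
      by_cases hT : i ∈ T <;> by_cases hR : i ∈ R <;>
        simp [Finset.mem_symmDiff, hT, hR, ha, hb]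
    rw [this, Finset.prod_ite, hfilter, hfilter', Finset.compl_eq_univ_sdiff]
  calc ∑ T : Finset (Fin n),
      (p₂ ^ T.card * (1 - p₂) ^ (n - T.card)) *
        (p₁ ^ (symmDiff T R).card * (1 - p₁) ^ (n - (symmDiff T R).card))
      = ∑ T ∈ (Finset.univ : Finset (Fin n)).powerset,
          (∏ i ∈ T, a i) * ∏ i ∈ Finset.univ \ T, b i := by
        rw [Finset.powerset_univ]
        exact Finset.sum_congr rfl fun T _ => step1 T
    _ = ∏ i : Fin n, (a i + b i) := (Finset.prod_add a b Finset.univ).symm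
    _ = ∏ i : Fin n, (if i ∈ R then q else 1 - q) := by
        apply Finset.prod_congr rfl
        intro i _
        by_cases hR : i ∈ R <;> simp [ha, hb, hq, hR] <;> try ring
    _ = q ^ R.card * (1 - q) ^ (n - R.card) := (coeff_prod q R).symm


end BitflipAux

end BitflipAuxSection

open BitflipAux in

/-- For a unitary `U` commuting with every single-qubit bit flip (e.g. an IQP circuit),
independent bit-flip input noise at rate `p₁` followed by `U` and independent bit-flip
output noise at rate `p₂` is equivalent to input noise alone at rate
`q = p₁(1-p₂) + p₂(1-p₁)`. -/
theorem bitflip_noise_merge (n : ℕ)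
    (ρ U : Matrix (Fin n → Fin 2) (Fin n → Fin 2) ℂ)
    (hU : U ∈ Matrix.unitaryGroup (Fin n → Fin 2) ℂ)
    (X : Finset (Fin n) → Matrix (Fin n → Fin 2) (Fin n → Fin 2) ℂ)
    (hX : ∀ S : Finset (Fin n), X S = Matrix.of fun x y : Fin n → Fin 2 =>
      if (∀ i : Fin n, y i = if i ∈ S then 1 - x i else x i) then (1 : ℂ) else 0)
    (hcomm : ∀ i : Fin n, U * X {i} = X {i} * U)
    (N : ℝ → Matrix (Fin n → Fin 2) (Fin n → Fin 2) ℂ →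
      Matrix (Fin n → Fin 2) (Fin n → Fin 2) ℂ)
    (hN : ∀ (p : ℝ) (σ : Matrix (Fin n → Fin 2) (Fin n → Fin 2) ℂ),
      N p σ = ∑ S : Finset (Fin n),
        (p ^ S.card * (1 - p) ^ (n - S.card)) • (X S * σ * X S))
    (p₁ p₂ : ℝ) (hp₁ : p₁ ∈ Set.Icc (0 : ℝ) 1) (hp₂ : p₂ ∈ Set.Icc (0 : ℝ) 1) :
    N p₂ (U * N p₁ ρ * Uᴴ) = U * N (p₁ * (1 - p₂) + p₂ * (1 - p₁)) ρ * Uᴴ := by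
  clear hU hp₁ hp₂
  have hmul := X_mul X hX
  have hherm := X_herm X hX
  have hempty := X_empty X hX
  have hUc : ∀ S, U * X S = X S * U := fun S => U_comm X U hmul hempty hcomm S
  have hUhc : ∀ S, Uᴴ * X S = X S * Uᴴ := by
    intro S
    have h := congrArg Matrix.conjTranspose (hUc S)
    simp only [Matrix.conjTranspose_mul, hherm] at h
    exact h.symm
  set c : ℝ → Finset (Fin n) → ℝ := fun p S => p ^ S.card * (1 - p) ^ (n - S.card) with hc
  set M : Finset (Fin n) → Matrix (Fin n → Fin 2) (Fin n → Fin 2) ℂ :=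
    fun R => U * (X R * ρ * X R) * Uᴴ with hM
  have hpush : ∀ (p : ℝ) (σ : Matrix (Fin n → Fin 2) (Fin n → Fin 2) ℂ),
      U * N p σ * Uᴴ = ∑ S : Finset (Fin n), c p S • (U * (X S * σ * X S) * Uᴴ) := by
    intro p σ
    rw [hN, Finset.mul_sum, Finset.sum_mul]
    simp only [Matrix.mul_smul, Matrix.smul_mul]
    rfl
  have hinner : ∀ T S : Finset (Fin n),
      X T * (U * (X S * ρ * X S) * Uᴴ) * X T = M (symmDiff T S) := by
    intro T S
    have h1 : X T * (U * (X S * ρ * X S) * Uᴴ) * X T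
        = (X T * U) * (X S * ρ * X S) * (Uᴴ * X T) := by
      simp only [mul_assoc]
    rw [h1, ← hUc, hUhc, hM]
    have h2 : X T * (X S * ρ * X S) * X T
        = (X T * X S) * ρ * (X S * X T) := by simp only [mul_assoc]
    calc U * X T * (X S * ρ * X S) * (X T * Uᴴ)
        = U * (X T * (X S * ρ * X S) * X T) * Uᴴ := by simp only [mul_assoc]
      _ = U * (X (symmDiff T S) * ρ * X (symmDiff T S)) * Uᴴ := by
          rw [h2, hmul, hmul, symmDiff_comm S T]
  rw [hN, hpush, hpush]
  calc ∑ T : Finset (Fin n), c p₂ T •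
        (X T * (∑ S : Finset (Fin n), c p₁ S • (U * (X S * ρ * X S) * Uᴴ)) * X T)
      = ∑ T : Finset (Fin n), ∑ S : Finset (Fin n),
          (c p₂ T * c p₁ S) • M (symmDiff T S) := by
        apply Finset.sum_congr rfl
        intro T _
        rw [Finset.mul_sum, Finset.sum_mul, Finset.smul_sum]
        apply Finset.sum_congr rfl
        intro S _
        rw [Matrix.mul_smul, Matrix.smul_mul, smul_smul, hinner]
    _ = ∑ T : Finset (Fin n), ∑ R : Finset (Fin n),
          (c p₂ T * c p₁ (symmDiff T R)) • M R := by
        apply Finset.sum_congr rfl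
        intro T _
        apply Fintype.sum_equiv
          (Function.Involutive.toPerm (fun R => symmDiff T R)
            (show Function.Involutive (fun R => symmDiff T R) from
              fun R => symmDiff_symmDiff_cancel_left T R))
        intro R
        simp only [Function.Involutive.coe_toPerm, symmDiff_symmDiff_cancel_left]
    _ = ∑ R : Finset (Fin n),
          (∑ T : Finset (Fin n), c p₂ T * c p₁ (symmDiff T R)) • M R := by
        rw [Finset.sum_comm]
        apply Finset.sum_congr rfl
        intro R _
        rw [Finset.sum_smul]
    _ = ∑ R : Finset (Fin n), c (p₁ * (1 - p₂) + p₂ * (1 - p₁)) R • M R := by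
        apply Finset.sum_congr rfl
        intro R _
        congr 1
        exact key p₁ p₂ R
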